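/- Let $X$ be a Banach space and $f : [a,b] \to X$ differentiable with $\|f'(t)\| \le M$ for all $t \in [a,b]$. Then $\left\| \int_a^b f(t)\,dt - (b-a)\cdot\frac{f(a)+f(b)}{2} \right\| \le \frac{1}{4}(b-a)^2 M$. -/

import Mathlib

open MeasureTheory intervalIntegral

theorem stmt10 {X : Type*} [NormedAddCommGroup X] [NormedSpace ℝ X] [CompleteSpace X]
    {a b : ℝ} (hab : a < b) {f f' : ℝ → X}
    (hderiv : ∀ t ∈ Set.Icc a b, HasDerivAt f (f' t) t)
    {M : ℝ} (hM : ∀ t ∈ Set.Icc a b, ‖f' t‖ ≤ M) :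
    ‖(∫ t in a..b, f t) - ((b - a) / 2) • (f a + f b)‖ ≤ (1 / 4) * (b - a) ^ 2 * M := by
  set c : ℝ := (a + b) / 2 with hc
  have hM0 : 0 ≤ M := le_trans (norm_nonneg _) (hM a ⟨le_refl _, hab.le⟩)
  have huIcc : Set.uIcc a b = Set.Icc a b := Set.uIcc_of_le hab.le
  have hcont : ContinuousOn f (Set.Icc a b) := fun t ht =>
    (hderiv t ht).continuousAt.continuousWithinAt
  have hf_int : IntervalIntegrable f volume a b := by
    apply ContinuousOn.intervalIntegrable
    rwa [huIcc]
  -- integrability of (t - c) • f' t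
  have heq : ∀ t ∈ Set.Ioc a b, f' t = deriv f t := fun t ht =>
    ((hderiv t ⟨ht.1.le, ht.2⟩).deriv).symm
  have hmeas : AEStronglyMeasurable (fun t => (t - c) • f' t)
      (volume.restrict (Set.Ioc a b)) := by
    have h1 : StronglyMeasurable (fun t : ℝ => (t - c) • deriv f t) :=
      ((measurable_id.sub_const c).stronglyMeasurable).smul (stronglyMeasurable_deriv f)
    refine h1.aestronglyMeasurable.congr ?_
    filter_upwards [ae_restrict_mem measurableSet_Ioc] with t ht
    rw [heq t ht]
  have hbound : ∀ t ∈ Set.Icc a b, ‖(t - c) • f' t‖ ≤ (b - a) * M := by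
    intro t ht
    rw [norm_smul, Real.norm_eq_abs]
    apply mul_le_mul _ (hM t ht) (norm_nonneg _) (by linarith)
    obtain ⟨h1, h2⟩ := ht
    rw [abs_le]
    constructor <;> simp only [hc] <;> linarith
  have hint' : IntervalIntegrable (fun t => (t - c) • f' t) volume a b := by
    rw [intervalIntegrable_iff, Set.uIoc_of_le hab.le]
    refine Integrable.mono' (g := fun _ => (b - a) * M)
      (integrableOn_const measure_Ioc_lt_top.ne) hmeas ?_
    filter_upwards [ae_restrict_mem measurableSet_Ioc] with t ht
    exact hbound t ⟨ht.1.le, ht.2⟩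
  -- FTC / integration by parts
  have key : (∫ t in a..b, (f t + (t - c) • f' t)) = (b - c) • f b - (a - c) • f a := by
    apply integral_eq_sub_of_hasDerivAt (f := fun t => (t - c) • f t)
    · intro t ht
      rw [huIcc] at ht
      have := ((hasDerivAt_id t).sub_const c).smul (hderiv t ht)
      have h2 : HasDerivAt ((fun x => x - c) • f) (f t + (t - c) • f' t) t := by
        simpa [add_comm] using this
      exact h2
    · exact hf_int.add hint'
  rw [integral_add hf_int hint'] at key
  have hsplit : (∫ t in a..b, f t) - ((b - a) / 2) • (f a + f b)
      = -(∫ t in a..b, (t - c) • f' t) := by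
    have hbc : b - c = (b - a) / 2 := by rw [hc]; ring
    have hac : a - c = -((b - a) / 2) := by rw [hc]; ring
    rw [eq_neg_iff_add_eq_zero, ← sub_eq_zero]
    have : ((b - a) / 2) • (f a + f b) = (b - c) • f b - (a - c) • f a := by
      rw [hbc, hac, smul_add, neg_smul, sub_neg_eq_add, add_comm]
    rw [this, ← key]; abel
  rw [hsplit, norm_neg]
  -- bound the integral
  have hb1 : ‖∫ t in a..b, (t - c) • f' t‖ ≤ |∫ t in a..b, |t - c| * M| := by
    apply intervalIntegral.norm_integral_le_abs_of_norm_le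
    · filter_upwards [ae_restrict_mem measurableSet_uIoc] with t ht
      rw [Set.uIoc_of_le hab.le] at ht
      rw [norm_smul, Real.norm_eq_abs]
      exact mul_le_mul_of_nonneg_left (hM t ⟨ht.1.le, ht.2⟩) (abs_nonneg _)
    · apply ContinuousOn.intervalIntegrable
      exact (((continuous_id.sub continuous_const).abs).mul continuous_const).continuousOn
  refine le_trans hb1 ?_
  -- compute ∫ |t - c| * M
  have hac : a ≤ c := by rw [hc]; linarith
  have hcb : c ≤ b := by rw [hc]; linarith
  have i1 : IntervalIntegrable (fun t => |t - c| * M) volume a c :=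
    (((continuous_id.sub continuous_const).abs).mul continuous_const).intervalIntegrable _ _
  have i2 : IntervalIntegrable (fun t => |t - c| * M) volume c b :=
    (((continuous_id.sub continuous_const).abs).mul continuous_const).intervalIntegrable _ _
  have hJ1 : (∫ t in a..c, |t - c| * M) = (∫ t in a..c, (c - t) * M) := by
    apply integral_congr
    intro t ht
    rw [Set.uIcc_of_le hac] at ht
    obtain ⟨h1, h2⟩ := ht
    show |t - c| * M = (c - t) * M
    rw [abs_of_nonpos (by linarith)]; ring
  have hJ2 : (∫ t in c..b, |t - c| * M) = (∫ t in c..b, (t - c) * M) := by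
    apply integral_congr
    intro t ht
    rw [Set.uIcc_of_le hcb] at ht
    obtain ⟨h1, h2⟩ := ht
    show |t - c| * M = (t - c) * M
    rw [abs_of_nonneg (by linarith)]
  have hv1 : (∫ t in a..c, (c - t) * M) = (c - a) ^ 2 / 2 * M := by
    have h : (∫ t in a..c, (c - t) * M) = (∫ t in a..c, c * M - M * t) := by
      apply integral_congr; intro t _; show (c - t) * M = c * M - M * t; ring
    have ic : IntervalIntegrable (fun _ : ℝ => c * M) volume a c := intervalIntegrable_const
    have im : IntervalIntegrable (fun t : ℝ => M * t) volume a c :=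
      (continuous_const.mul continuous_id').intervalIntegrable _ _
    rw [h, intervalIntegral.integral_sub ic im,
      intervalIntegral.integral_const, intervalIntegral.integral_const_mul, integral_id]
    simp only [smul_eq_mul]; ring
  have hv2 : (∫ t in c..b, (t - c) * M) = (b - c) ^ 2 / 2 * M := by
    have h : (∫ t in c..b, (t - c) * M) = (∫ t in c..b, M * t - c * M) := by
      apply integral_congr; intro t _; show (t - c) * M = M * t - c * M; ring
    have ic : IntervalIntegrable (fun _ : ℝ => c * M) volume c b := intervalIntegrable_const
    have im : IntervalIntegrable (fun t : ℝ => M * t) volume c b :=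
      (continuous_const.mul continuous_id').intervalIntegrable _ _
    rw [h, intervalIntegral.integral_sub im ic,
      intervalIntegral.integral_const, intervalIntegral.integral_const_mul, integral_id]
    simp only [smul_eq_mul]; ring
  rw [← integral_add_adjacent_intervals i1 i2, hJ1, hJ2, hv1, hv2]
  have hq : (c - a) ^ 2 / 2 * M + (b - c) ^ 2 / 2 * M = (1 / 4) * (b - a) ^ 2 * M := by
    rw [hc]; ring
  rw [hq, abs_of_nonneg (by positivity)]
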